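/- Let K be a field, L a Lie algebra over K, and μ ≥ 1. Let F : ℤ → (K-subspaces of L) satisfy: (i) F(j) = L for all j ≤ −μ; (ii) F(j+1) ⊆ F(j) for all j ≤ −1; (iii) ⁅F(j), F(k)⁆ ⊆ F(j+k) for all j, k ≤ 0; (iv) F(j−1) = F(j) + ⁅F(−1), F(j)⁆ for all j ≤ −1; (v) for every j ≥ 1, F(j) = {X ∈ F(0) : ⁅X, Z⁆ ∈ F(j−1) for all Z ∈ F(−1)}. Then ⁅F(j), F(k)⁆ ⊆ F(j+k) holds for all j, k ∈ ℤ. -/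

import Mathlib

/-- The subspace spanned by all brackets of elements of `A` with elements of `B`. -/
def bracketSpan (K : Type*) {L : Type*} [Field K] [LieRing L] [LieAlgebra K L]
    (A B : Submodule K L) : Submodule K L :=
  Submodule.span K {z | ∃ x ∈ A, ∃ y ∈ B, z = ⁅x, y⁆}

theorem mem_bracketSpan (K : Type*) {L : Type*} [Field K] [LieRing L] [LieAlgebra K L]
    {A B : Submodule K L} {x y : L} (hx : x ∈ A) (hy : y ∈ B) :
    ⁅x, y⁆ ∈ bracketSpan K A B :=
  Submodule.subset_span ⟨x, hx, y, hy, rfl⟩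

theorem filtration_bracket_compat
    (K L : Type*) [Field K] [LieRing L] [LieAlgebra K L]
    (μ : ℕ) (hμ : 1 ≤ μ) (F : ℤ → Submodule K L)
    (h_deep : ∀ j : ℤ, j ≤ -(μ : ℤ) → F j = ⊤)
    (h_mono : ∀ j : ℤ, j ≤ -1 → F (j + 1) ≤ F j)
    (h_neg : ∀ j k : ℤ, j ≤ 0 → k ≤ 0 → bracketSpan K (F j) (F k) ≤ F (j + k))
    (h_gen : ∀ j : ℤ, j ≤ -1 → F (j - 1) = F j ⊔ bracketSpan K (F (-1)) (F j))
    (h_prol : ∀ j : ℤ, 1 ≤ j → ∀ x : L,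
      x ∈ F j ↔ (x ∈ F 0 ∧ ∀ z ∈ F (-1), ⁅x, z⁆ ∈ F (j - 1))) :
    ∀ j k : ℤ, bracketSpan K (F j) (F k) ≤ F (j + k) := by
  -- elementwise version of h_neg
  have hne : ∀ j k : ℤ, j ≤ 0 → k ≤ 0 → ∀ x ∈ F j, ∀ z ∈ F k, ⁅x, z⁆ ∈ F (j + k) :=
    fun j k hj hk x hx z hz => h_neg j k hj hk (mem_bracketSpan K hx hz)
  have hF0 : ∀ j : ℤ, 1 ≤ j → F j ≤ F 0 := fun j hj x hx => ((h_prol j hj x).mp hx).1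
  -- monotonicity everywhere
  have natMono : ∀ n : ℕ, F ((n : ℤ) + 1) ≤ F (n : ℤ) := by
    intro n
    induction n with
    | zero => exact hF0 1 le_rfl
    | succ m ih =>
      intro x hx
      rw [Nat.cast_succ] at hx
      obtain ⟨hx0, hxb⟩ := (h_prol ((m : ℤ) + 1 + 1) (by omega) x).mp hx
      refine (h_prol ((m : ℤ) + 1) (by omega) x).mpr ⟨hx0, fun z hz => ?_⟩
      have h1 := hxb z hz
      have e : ((m : ℤ) + 1 + 1 - 1) = (m : ℤ) + 1 := by ring
      rw [e] at h1
      have := ih h1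
      have e2 : ((m : ℤ)) = ((m : ℤ) + 1 - 1) := by ring
      rwa [e2] at this
  have hmono : ∀ m : ℤ, F (m + 1) ≤ F m := by
    intro m
    rcases le_or_gt m (-1) with hm | hm
    · exact h_mono m hm
    · obtain ⟨n, rfl⟩ : ∃ n : ℕ, m = (n : ℤ) := ⟨m.toNat, by omega⟩
      exact natMono n
  have hmono' : ∀ a b : ℤ, a ≤ b → F b ≤ F a := fun a b hab =>
    Int.le_induction (motive := fun b _ => F b ≤ F a) le_rfl (fun c _ ih => le_trans (hmono c) ih) b hab
  -- brackets with F(-1) always lower degree by one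
  have hneg1 : ∀ m : ℤ, ∀ y ∈ F m, ∀ u ∈ F (-1), ⁅u, y⁆ ∈ F (m - 1) := by
    intro m y hy u hu
    rcases le_or_gt m 0 with hm | hm
    · have := hne (-1) m (by omega) hm u hu y hy
      have e : (-1 + m) = m - 1 := by ring
      rwa [e] at this
    · have := ((h_prol m hm y).mp hy).2 u hu
      rw [← lie_skew]
      exact neg_mem this
  -- main inductive step: positive `j`, nonpositive `k`
  have step : ∀ j : ℤ, 1 ≤ j →
      (∀ k : ℤ, k ≤ 0 → ∀ x ∈ F (j - 1), ∀ z ∈ F k, ⁅x, z⁆ ∈ F (j - 1 + k)) →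
      ∀ k : ℤ, k ≤ 0 → ∀ x ∈ F j, ∀ z ∈ F k, ⁅x, z⁆ ∈ F (j + k) := by
    intro j hj prev
    -- brackets with F(-1-n) by induction on n
    have negpart : ∀ n : ℕ, ∀ x ∈ F j, ∀ z ∈ F (-1 - (n : ℤ)), ⁅x, z⁆ ∈ F (j - 1 - n) := by
      intro n
      induction n with
      | zero =>
        intro x hx z hz
        simp only [Nat.cast_zero, sub_zero] at *
        exact ((h_prol j hj x).mp hx).2 z hz
      | succ m ih =>
        intro x hx z hz
        have hz' : z ∈ F ((-1 - (m : ℤ)) - 1) := by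
          have e : (-1 - ((m : ℤ) + 1)) = (-1 - (m : ℤ)) - 1 := by ring
          rw [Nat.cast_succ, e] at hz
          exact hz
        rw [h_gen (-1 - (m : ℤ)) (by omega)] at hz'
        have goal_e : (j - 1 - ((m : ℤ) + 1)) = j - 2 - m := by ring
        rw [Nat.cast_succ, goal_e]
        -- use the comap of ad x
        have hcomap : F (-1 - (m : ℤ)) ⊔ bracketSpan K (F (-1)) (F (-1 - (m : ℤ)))
            ≤ (F (j - 2 - m)).comap (LieAlgebra.ad K L x) := by
          refine sup_le ?_ ?_
          · intro w hw
            have h1 := ih x hx w hw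
            have : ⁅x, w⁆ ∈ F (j - 2 - m) := hmono' _ _ (by omega) h1
            exact this
          · refine Submodule.span_le.mpr ?_
            rintro _ ⟨u, hu, v, hv, rfl⟩
            have hxu : ⁅x, u⁆ ∈ F (j - 1) := ((h_prol j hj x).mp hx).2 u hu
            have t1 : ⁅⁅x, u⁆, v⁆ ∈ F (j - 2 - m) := by
              have := prev (-1 - (m : ℤ)) (by omega) ⁅x, u⁆ hxu v hv
              have e : (j - 1 + (-1 - (m : ℤ))) = j - 2 - m := by ring
              rwa [e] at this
            have hxv : ⁅x, v⁆ ∈ F (j - 1 - m) := ih x hx v hv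
            have t2 : ⁅u, ⁅x, v⁆⁆ ∈ F (j - 2 - m) := by
              have := hneg1 (j - 1 - m) _ hxv u hu
              have e : (j - 1 - (m : ℤ) - 1) = j - 2 - m := by ring
              rwa [e] at this
            show ⁅x, ⁅u, v⁆⁆ ∈ F (j - 2 - m)
            rw [leibniz_lie]
            exact add_mem t1 t2
        exact hcomap hz'
    intro k hk x hx z hz
    rcases eq_or_lt_of_le hk with hk0 | hk1
    · -- k = 0
      subst hk0
      rw [add_zero]
      refine (h_prol j hj _).mpr ⟨?_, fun w hw => ?_⟩
      · have := hne 0 0 le_rfl le_rfl x (hF0 j hj hx) z hz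
        simpa using this
      · rw [lie_lie]
        refine sub_mem ?_ ?_
        · have hzw : ⁅z, w⁆ ∈ F (-1) := by
            have := hne 0 (-1) le_rfl (by omega) z hz w hw
            simpa using this
          exact ((h_prol j hj x).mp hx).2 _ hzw
        · have hxw : ⁅x, w⁆ ∈ F (j - 1) := ((h_prol j hj x).mp hx).2 w hw
          have := prev 0 le_rfl ⁅x, w⁆ hxw z hz
          rw [add_zero] at this
          rw [← lie_skew]
          exact neg_mem this
    · -- k ≤ -1
      obtain ⟨n, rfl⟩ : ∃ n : ℕ, k = -1 - (n : ℤ) := ⟨(-1 - k).toNat, by omega⟩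
      have := negpart n x hx z hz
      have e : (j - 1 - (n : ℤ)) = j + (-1 - n) := by ring
      rwa [e] at this
  -- positive j, nonpositive k, all j
  have key : ∀ j : ℤ, 1 ≤ j → ∀ k : ℤ, k ≤ 0 → ∀ x ∈ F j, ∀ z ∈ F k, ⁅x, z⁆ ∈ F (j + k) := by
    intro j hj
    refine Int.le_induction (motive := fun j _ => ∀ k : ℤ, k ≤ 0 → ∀ x ∈ F j, ∀ z ∈ F k, ⁅x, z⁆ ∈ F (j + k)) ?_ ?_ j hj
    · refine step 1 le_rfl ?_
      intro k hk x hx z hz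
      have := hne 0 k le_rfl hk x (by simpa using hx) z hz
      have e : (0 + k : ℤ) = 1 - 1 + k := by ring
      rwa [e] at this
    · intro c hc ih
      refine step (c + 1) (by omega) ?_
      intro k hk x hx z hz
      have := ih k hk x (by simpa using hx) z hz
      have e : (c + k : ℤ) = c + 1 - 1 + k := by ring
      rwa [e] at this
  -- both positive, induction on j + k
  have pos : ∀ N : ℕ, ∀ j k : ℤ, 1 ≤ j → 1 ≤ k → j + k ≤ N →
      ∀ x ∈ F j, ∀ z ∈ F k, ⁅x, z⁆ ∈ F (j + k) := by
    intro N
    induction N with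
    | zero => intro j k hj hk hN; omega
    | succ M ih =>
      intro j k hj hk hN x hx z hz
      refine (h_prol (j + k) (by omega) _).mpr ⟨?_, fun w hw => ?_⟩
      · have := hne 0 0 le_rfl le_rfl x (hF0 j hj hx) z (hF0 k hk hz)
        simpa using this
      · rw [lie_lie]
        refine sub_mem ?_ ?_
        · have hzw : ⁅z, w⁆ ∈ F (k - 1) := ((h_prol k hk z).mp hz).2 w hw
          rcases eq_or_lt_of_le hk with hk1 | hk2
          · have := key j hj (k - 1) (by omega) x hx _ hzw
            have e : (j + (k - 1)) = j + k - 1 := by ring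
            rwa [e] at this
          · have := ih j (k - 1) hj (by omega) (by omega) x hx _ hzw
            have e : (j + (k - 1)) = j + k - 1 := by ring
            rwa [e] at this
        · have hxw : ⁅x, w⁆ ∈ F (j - 1) := ((h_prol j hj x).mp hx).2 w hw
          rcases eq_or_lt_of_le hj with hj1 | hj2
          · have := key k hk (j - 1) (by omega) z hz _ hxw
            have e : (k + (j - 1)) = j + k - 1 := by ring
            rwa [e] at this
          · have := ih k (j - 1) hk (by omega) (by omega) z hz _ hxw
            have e : (k + (j - 1)) = j + k - 1 := by ring
            rwa [e] at this
  -- conclude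
  intro j k
  refine Submodule.span_le.mpr ?_
  rintro _ ⟨x, hx, z, hz, rfl⟩
  rcases le_or_gt j 0 with hj | hj
  · rcases le_or_gt k 0 with hk | hk
    · exact hne j k hj hk x hx z hz
    · have := key k hk j hj z hz x hx
      rw [← lie_skew]
      have e : (k + j) = j + k := by ring
      rw [e] at this
      exact neg_mem this
  · rcases le_or_gt k 0 with hk | hk
    · exact key j hj k hk x hx z hz
    · exact pos (j + k).toNat j k hj hk (by omega) x hx z hz
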